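/- arXiv:1102.0712 — 6 statements merged into one kernel-verified Lean document; each statement's English description precedes it below -/
import Mathlib

section
/- For a finite graph G with root ∘ of neighbors v_1, ..., v_k, the root-exposure probability satisfies the recursion R_z[G,∘] = z² / (z² + Σ_{v ∼ ∘} R_z[G - ∘, v]), for every z > 0. -/
open scoped Classical

/-- A matching on a graph `G`: a set of edges of `G` that are pairwise non-adjacent. -/
def IsMatching {V : Type*} (G : SimpleGraph V) (M : Finset (Sym2 V)) : Prop :=
  (∀ e ∈ M, e ∈ G.edgeSet) ∧
    ∀ e ∈ M, ∀ f ∈ M, e ≠ f → ∀ v : V, v ∈ e → v ∉ f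

/-- The matching polynomial `P_G(z) = Σ_{M matching of G} z^{|V| - 2|M|}`. -/
noncomputable def matchingPolynomial {V : Type*} [Fintype V] (G : SimpleGraph V)
    (z : ℝ) : ℝ :=
  ∑ M ∈ Finset.univ.filter (fun M : Finset (Sym2 V) => IsMatching G M),
    z ^ (Fintype.card V - 2 * M.card)

/-- The root-exposure probability `R_z[G,∘] = z ⬝ P_{G-∘}(z) / P_G(z)`. -/
noncomputable def rootExposure {V : Type*} [Fintype V] (G : SimpleGraph V)
    (r : V) (z : ℝ) : ℝ :=
  z * matchingPolynomial (G.induce {v | v ≠ r}) z / matchingPolynomial G z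

section Helpers

variable {V : Type*}

/-- Sum of `f M.card` over matchings `M` of `G` satisfying the extra predicate `P`. -/
noncomputable def msum [Fintype V] (G : SimpleGraph V) (P : Finset (Sym2 V) → Prop)
    (f : ℕ → ℝ) : ℝ :=
  ∑ M ∈ Finset.univ.filter (fun M : Finset (Sym2 V) => IsMatching G M ∧ P M), f M.card

lemma sum_filter_iff {α : Type*} [Fintype α] {p q : α → Prop}
    [DecidablePred p] [DecidablePred q] (h : ∀ a, p a ↔ q a) (f : α → ℝ) :
    ∑ x ∈ Finset.univ.filter p, f x = ∑ x ∈ Finset.univ.filter q, f x := by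
  apply Finset.sum_congr _ (fun _ _ => rfl)
  exact Finset.filter_congr (fun a _ => h a)

lemma msum_congr [Fintype V] {G : SimpleGraph V} {P Q : Finset (Sym2 V) → Prop}
    {f g : ℕ → ℝ} (hPQ : ∀ M, IsMatching G M → (P M ↔ Q M))
    (hfg : ∀ M, IsMatching G M → Q M → f M.card = g M.card) :
    msum G P f = msum G Q g := by
  unfold msum
  rw [sum_filter_iff (q := fun M => IsMatching G M ∧ Q M)
    (fun M => and_congr_right fun hm => hPQ M hm) (fun M => f M.card)]
  refine Finset.sum_congr rfl fun M hM => ?_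
  simp only [Finset.mem_filter] at hM
  exact hfg M hM.2.1 hM.2.2

lemma msum_factor [Fintype V] {G : SimpleGraph V} {P : Finset (Sym2 V) → Prop}
    {f g : ℕ → ℝ} {c : ℝ} (h : ∀ M, IsMatching G M → P M → f M.card = c * g M.card) :
    msum G P f = c * msum G P g := by
  unfold msum
  rw [Finset.mul_sum]
  refine Finset.sum_congr rfl fun M hM => ?_
  simp only [Finset.mem_filter] at hM
  exact h M hM.2.1 hM.2.2

lemma matchingPolynomial_eq_msum [Fintype V] (G : SimpleGraph V) (z : ℝ) :
    matchingPolynomial G z =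
      msum G (fun _ => True) (fun n => z ^ (Fintype.card V - 2 * n)) := by
  unfold matchingPolynomial msum
  apply Finset.sum_congr _ (fun _ _ => rfl)
  ext M
  simp only [Finset.mem_filter, Finset.mem_univ, true_and, and_true]

lemma msum_pos [Fintype V] (G : SimpleGraph V) {z : ℝ} (hz : 0 < z)
    {P : Finset (Sym2 V) → Prop} {m : ℕ} (hP : P ∅) :
    0 < msum G P (fun n => z ^ (m - 2 * n)) := by
  refine Finset.sum_pos (fun M _ => pow_pos hz _) ⟨∅, ?_⟩
  rw [Finset.mem_filter]
  exact ⟨Finset.mem_univ _, ⟨by simp, by simp⟩, hP⟩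

lemma msum_nonneg [Fintype V] (G : SimpleGraph V) {z : ℝ} (hz : 0 < z)
    {P : Finset (Sym2 V) → Prop} {m : ℕ} :
    0 ≤ msum G P (fun n => z ^ (m - 2 * n)) :=
  Finset.sum_nonneg fun M _ => (pow_pos hz _).le

/-- The vertices of an edge, as a finset. -/
noncomputable def esupp [Fintype V] (e : Sym2 V) : Finset V :=
  Finset.univ.filter (· ∈ e)

lemma mem_esupp [Fintype V] {e : Sym2 V} {x : V} : x ∈ esupp e ↔ x ∈ e := by
  simp [esupp]

lemma esupp_card [Fintype V] {G : SimpleGraph V} {e : Sym2 V} (he : e ∈ G.edgeSet) :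
    (esupp e).card = 2 := by
  induction e using Sym2.ind with
  | _ a b =>
    have hne : a ≠ b := ((SimpleGraph.mem_edgeSet _).mp he).ne
    have : esupp s(a, b) = {a, b} := by
      ext x; simp [esupp]
    rw [this, Finset.card_insert_of_notMem (by simp [hne]), Finset.card_singleton]

lemma matching_card_le [Fintype V] {G : SimpleGraph V} {M : Finset (Sym2 V)}
    (h : IsMatching G M) {S : Finset V} (hS : ∀ e ∈ M, ∀ x ∈ e, x ∈ S) :
    2 * M.card ≤ S.card := by
  have hdisj : ∀ e ∈ M, ∀ f ∈ M, e ≠ f → Disjoint (esupp e) (esupp f) := by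
    intro e he f hf hef
    rw [Finset.disjoint_left]
    intro x hx hxf
    exact h.2 e he f hf hef x (mem_esupp.1 hx) (mem_esupp.1 hxf)
  have hcard : (M.biUnion esupp).card = 2 * M.card := by
    rw [Finset.card_biUnion hdisj,
      Finset.sum_congr rfl fun e he => esupp_card (h.1 e he)]
    simp [mul_comm]
  calc 2 * M.card = (M.biUnion esupp).card := hcard.symm
    _ ≤ S.card := Finset.card_le_card (by
        intro x hx
        obtain ⟨e, he, hxe⟩ := Finset.mem_biUnion.1 hx
        exact hS e he x (mem_esupp.1 hxe))

lemma edge_induce {G : SimpleGraph V} {S : Set V} (e : Sym2 S) :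
    e ∈ (G.induce S).edgeSet ↔ e.map Subtype.val ∈ G.edgeSet := by
  induction e using Sym2.ind with
  | _ a b => simp

lemma IsMatching_image_iff {G : SimpleGraph V} {S : Set V} {M : Finset (Sym2 S)} :
    IsMatching (G.induce S) M ↔ IsMatching G (M.image (Sym2.map Subtype.val)) := by
  constructor
  · rintro ⟨h1, h2⟩
    constructor
    · intro e he
      obtain ⟨e', he', rfl⟩ := Finset.mem_image.1 he
      exact (edge_induce e').1 (h1 e' he')
    · intro e he f hf hef x hxe hxf
      obtain ⟨e', he', rfl⟩ := Finset.mem_image.1 he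
      obtain ⟨f', hf', rfl⟩ := Finset.mem_image.1 hf
      have hef' : e' ≠ f' := fun h => hef (by rw [h])
      obtain ⟨a, ha, rfl⟩ := Sym2.mem_map.1 hxe
      obtain ⟨b, hb, hab⟩ := Sym2.mem_map.1 hxf
      have hba : b = a := Subtype.ext hab
      exact h2 e' he' f' hf' hef' a ha (hba ▸ hb)
  · rintro ⟨h1, h2⟩
    constructor
    · intro e he
      exact (edge_induce e).2 (h1 _ (Finset.mem_image_of_mem _ he))
    · intro e he f hf hef x hxe hxf
      exact h2 (e.map Subtype.val) (Finset.mem_image_of_mem _ he)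
        (f.map Subtype.val) (Finset.mem_image_of_mem _ hf)
        (fun h => hef (Sym2.map.injective Subtype.val_injective h)) x.val
        (Sym2.mem_map.2 ⟨x, hxe, rfl⟩) (Sym2.mem_map.2 ⟨x, hxf, rfl⟩)

lemma msum_induce [Fintype V] (G : SimpleGraph V) (S : Set V) (f : ℕ → ℝ)
    (P : Sym2 V → Prop) (Q : Sym2 S → Prop)
    (hQ : ∀ e, Q e ↔ P (e.map Subtype.val)) [instS : Fintype S] :
    @msum _ instS (G.induce S) (fun M => ∀ e ∈ M, Q e) f =
    msum G (fun M => ∀ e ∈ M, (∀ x ∈ e, x ∈ S) ∧ P e) f := by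
  unfold msum
  have hinj : Function.Injective (Sym2.map (Subtype.val : S → V)) :=
    Sym2.map.injective Subtype.val_injective
  refine Finset.sum_bij (fun M _ => M.image (Sym2.map Subtype.val)) ?_ ?_ ?_ ?_
  · intro M hM
    simp only [Finset.mem_filter] at hM ⊢
    obtain ⟨-, hmat, hP⟩ := hM
    refine ⟨Finset.mem_univ _, IsMatching_image_iff.1 hmat, ?_⟩
    intro e he
    obtain ⟨e', he', rfl⟩ := Finset.mem_image.1 he
    constructor
    · intro x hx
      obtain ⟨a, _, rfl⟩ := Sym2.mem_map.1 hx
      exact a.2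
    · exact (hQ e').1 (hP e' he')
  · intro M₁ h₁ M₂ h₂ heq
    exact Finset.image_injective hinj heq
  · intro M hM
    simp only [Finset.mem_filter] at hM
    obtain ⟨-, hmat, hP⟩ := hM
    have hsupp : ∀ e ∈ M, ∀ x ∈ e, x ∈ S := fun e he => (hP e he).1
    have himg : (M.attach.image (fun e : {x // x ∈ M} =>
        Sym2.attachWith e.1 (hsupp e.1 e.2))).image (Sym2.map Subtype.val) = M := by
      rw [Finset.image_image]
      have : ((Sym2.map Subtype.val) ∘ fun e : {x // x ∈ M} =>
          Sym2.attachWith e.1 (hsupp e.1 e.2)) = fun e => e.1 := by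
        funext e
        exact Sym2.attachWith_map_subtypeVal _
      rw [this, Finset.attach_image_val]
    refine ⟨M.attach.image (fun e => Sym2.attachWith e.1 (hsupp e.1 e.2)), ?_, himg⟩
    simp only [Finset.mem_filter]
    refine ⟨Finset.mem_univ _, IsMatching_image_iff.2 (by rw [himg]; exact hmat), ?_⟩
    intro e he
    have : e.map Subtype.val ∈ M := by
      rw [← himg]
      exact Finset.mem_image_of_mem _ he
    exact (hQ e).2 (hP _ this).2
  · intro M hM
    rw [Finset.card_image_of_injective _ hinj]

lemma matchingPolynomial_induce_msum [Fintype V] (G : SimpleGraph V) (S : Set V)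
    (z : ℝ) [instS : Fintype S] :
    @matchingPolynomial _ instS (G.induce S) z =
      msum G (fun M => ∀ e ∈ M, ∀ x ∈ e, x ∈ S)
        (fun n => z ^ (@Fintype.card S instS - 2 * n)) := by
  rw [matchingPolynomial_eq_msum]
  have h1 : @msum _ instS (G.induce S) (fun _ => True)
      (fun n => z ^ (@Fintype.card S instS - 2 * n)) =
      @msum _ instS (G.induce S) (fun M => ∀ e ∈ M, (fun _ => True) e)
      (fun n => z ^ (@Fintype.card S instS - 2 * n)) :=
    msum_congr (by simp) (by simp)
  rw [h1, msum_induce G S _ (fun _ => True) (fun _ => True) (fun _ => Iff.rfl)]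
  exact msum_congr (by simp) (by simp)

lemma card_ne_aux {α : Type*} [Fintype α] (t : α)
    [inst : Fintype ({w : α | w ≠ t} : Set α)] :
    @Fintype.card _ inst = Fintype.card α - 1 := by
  have h0 : @Fintype.card _ inst = Fintype.card {w : α // ¬ (w = t)} :=
    Fintype.card_congr (Equiv.refl _)
  rw [h0, Fintype.card_subtype_compl, Fintype.card_subtype_eq]

lemma msum_split_pred [Fintype V] (G : SimpleGraph V)
    (P Q : Finset (Sym2 V) → Prop) (f : ℕ → ℝ) :
    msum G P f =
      msum G (fun M => P M ∧ Q M) f + msum G (fun M => P M ∧ ¬ Q M) f := by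
  unfold msum
  rw [← Finset.sum_filter_add_sum_filter_not
    (Finset.univ.filter fun M : Finset (Sym2 V) => IsMatching G M ∧ P M) Q
    (fun M => f M.card)]
  congr 1 <;>
  · apply Finset.sum_congr _ (fun _ _ => rfl)
    ext M
    simp only [Finset.mem_filter, Finset.mem_univ, true_and]
    tauto

lemma msum_cover [Fintype V] (G : SimpleGraph V) (r : V) (N : Finset V)
    (hN : ∀ v, v ∈ N ↔ G.Adj r v) (f : ℕ → ℝ) :
    msum G (fun M => ¬ ∀ e ∈ M, ∀ x ∈ e, x ≠ r) f =
      ∑ v ∈ N, msum G (fun M => ∀ e ∈ M, ∀ x ∈ e, x ≠ r ∧ x ≠ v)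
        (fun m => f (m + 1)) := by
  unfold msum
  rw [Finset.sum_sigma']
  refine (Finset.sum_bij
    (fun (p : Σ _ : V, Finset (Sym2 V)) _ => insert s(r, p.1) p.2) ?_ ?_ ?_ ?_).symm
  · rintro ⟨v, M⟩ hp
    simp only [Finset.mem_sigma, Finset.mem_filter, Finset.mem_univ, true_and] at hp
    obtain ⟨hv, hmat, havoid⟩ := hp
    rw [hN] at hv
    simp only [Finset.mem_filter, Finset.mem_univ, true_and]
    constructor
    · constructor
      · intro e he
        rcases Finset.mem_insert.1 he with rfl | he'
        · exact hv
        · exact hmat.1 e he'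
      · intro e he g hg heg x hxe hxg
        rcases Finset.mem_insert.1 he with rfl | he' <;>
          rcases Finset.mem_insert.1 hg with rfl | hg'
        · exact heg rfl
        · rcases Sym2.mem_iff.1 hxe with rfl | rfl
          · exact (havoid g hg' x hxg).1 rfl
          · exact (havoid g hg' x hxg).2 rfl
        · rcases Sym2.mem_iff.1 hxg with rfl | rfl
          · exact (havoid e he' _ hxe).1 rfl
          · exact (havoid e he' _ hxe).2 rfl
        · exact hmat.2 e he' g hg' heg x hxe hxg
    · intro hcon
      exact hcon s(r, v) (Finset.mem_insert_self _ _) r (Sym2.mem_mk_left _ _) rfl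
  · rintro ⟨v₁, M₁⟩ h₁ ⟨v₂, M₂⟩ h₂ heq
    simp only [Finset.mem_sigma, Finset.mem_filter, Finset.mem_univ, true_and] at h₁ h₂
    obtain ⟨hv₁, hmat₁, havoid₁⟩ := h₁
    obtain ⟨hv₂, hmat₂, havoid₂⟩ := h₂
    change insert s(r, v₁) M₁ = insert s(r, v₂) M₂ at heq
    have hnotin₁ : s(r, v₁) ∉ M₁ :=
      fun h => (havoid₁ _ h r (Sym2.mem_mk_left _ _)).1 rfl
    have hnotin₂ : s(r, v₂) ∉ M₂ :=
      fun h => (havoid₂ _ h r (Sym2.mem_mk_left _ _)).1 rfl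
    have hv : v₁ = v₂ := by
      have h12 : s(r, v₂) ∈ insert s(r, v₁) M₁ := by
        rw [heq]; exact Finset.mem_insert_self _ _
      rcases Finset.mem_insert.1 h12 with h | h
      · exact (Sym2.congr_right.1 h.symm)
      · exact absurd rfl (havoid₁ _ h r (Sym2.mem_mk_left _ _)).1
    subst hv
    have hM : M₁ = M₂ := by
      have e1 : (insert s(r, v₁) M₁).erase s(r, v₁) = M₁ :=
        Finset.erase_insert hnotin₁
      have e2 : (insert s(r, v₁) M₂).erase s(r, v₁) = M₂ :=
        Finset.erase_insert hnotin₂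
      rw [← e1, ← e2, heq]
    rw [hM]
  · intro M hM
    simp only [Finset.mem_filter, Finset.mem_univ, true_and] at hM
    obtain ⟨hmat, hcov⟩ := hM
    push_neg at hcov
    obtain ⟨e, he, x, hxe, hxr⟩ := hcov
    subst hxr
    obtain ⟨v, rfl⟩ := Sym2.mem_iff_exists.1 hxe
    have hadj : G.Adj x v := (SimpleGraph.mem_edgeSet _).mp (hmat.1 _ he)
    refine ⟨⟨v, M.erase s(x, v)⟩, ?_, ?_⟩
    · simp only [Finset.mem_sigma, Finset.mem_filter, Finset.mem_univ, true_and]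
      refine ⟨(hN v).2 hadj, ⟨?_, ?_⟩, ?_⟩
      · intro g hg
        exact hmat.1 g (Finset.mem_of_mem_erase hg)
      · intro g hg g' hg' hgg' y hy
        exact hmat.2 g (Finset.mem_of_mem_erase hg) g'
          (Finset.mem_of_mem_erase hg') hgg' y hy
      · intro g hg y hy
        have hgne : g ≠ s(x, v) := Finset.ne_of_mem_erase hg
        have hyne : y ∉ s(x, v) :=
          hmat.2 g (Finset.mem_of_mem_erase hg) s(x, v) he hgne y hy
        constructor
        · intro h; exact hyne (h ▸ Sym2.mem_mk_left _ _)
        · intro h; exact hyne (h ▸ Sym2.mem_mk_right _ _)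
    · exact Finset.insert_erase he
  · rintro ⟨v, M⟩ hp
    simp only [Finset.mem_sigma, Finset.mem_filter, Finset.mem_univ, true_and] at hp
    obtain ⟨-, -, havoid⟩ := hp
    have hnotin : s(r, v) ∉ M :=
      fun h => (havoid _ h r (Sym2.mem_mk_left _ _)).1 rfl
    simp only [Finset.card_insert_of_notMem hnotin]

lemma msum_split [Fintype V] (G : SimpleGraph V) (r : V) (N : Finset V)
    (hN : ∀ v, v ∈ N ↔ G.Adj r v) (f : ℕ → ℝ) :
    msum G (fun _ => True) f =
      msum G (fun M => ∀ e ∈ M, ∀ x ∈ e, x ≠ r) f +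
      ∑ v ∈ N, msum G (fun M => ∀ e ∈ M, ∀ x ∈ e, x ≠ r ∧ x ≠ v)
        (fun m => f (m + 1)) := by
  have h := msum_split_pred G (fun _ => True)
    (fun M => ∀ e ∈ M, ∀ x ∈ e, x ≠ r) f
  rw [h]
  congr 1
  · exact msum_congr (fun M _ => by tauto) (fun _ _ _ => rfl)
  · rw [← msum_cover G r N hN f]
    exact msum_congr (fun M _ => by tauto) (fun _ _ _ => rfl)

end Helpers

lemma final_algebra (z B s : ℝ) (hz : 0 < z) (hB : 0 < B) (hs : 0 ≤ s) :
    z * B / (z * B + s) = z ^ 2 / (z ^ 2 + z * s / B) := by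
  have hA : 0 < z * B + s := by positivity
  have hden : 0 < z ^ 2 + z * s / B := by positivity
  rw [div_eq_div_iff (ne_of_gt hA) (ne_of_gt hden)]
  field_simp

/-- The local recursion for the root-exposure probability:
`R_z[G,∘] = z² / (z² + Σ_{v ∼ ∘} R_z[G-∘, v])` for every `z > 0`. -/
theorem rootExposure_recursion {V : Type*} [Fintype V]
    (G : SimpleGraph V) [DecidableRel G.Adj] (r : V) (z : ℝ) (hz : 0 < z) :
    rootExposure G r z =
      z ^ 2 / (z ^ 2 + ∑ v ∈ (G.neighborFinset r).attach,
        rootExposure (G.induce {u : V | u ≠ r})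
          ⟨v.1, ((G.mem_neighborFinset r v.1).mp v.2).ne'⟩ z) := by
  have hn1 : 1 ≤ Fintype.card V := Fintype.card_pos_iff.2 ⟨r⟩
  set n := Fintype.card V with hn
  have hcardS : Fintype.card ↥{u : V | u ≠ r} = n - 1 := card_ne_aux r
  -- the polynomial of `G - r` in `V`-world form
  have hB : ∀ instS : Fintype ↥{u : V | u ≠ r},
      @matchingPolynomial _ instS (G.induce {u : V | u ≠ r}) z =
      msum G (fun M => ∀ e ∈ M, ∀ x ∈ e, x ≠ r)
        (fun m => z ^ (n - 1 - 2 * m)) := by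
    intro instS
    rw [matchingPolynomial_induce_msum G {u : V | u ≠ r} z (instS := instS),
      card_ne_aux r]
    exact msum_congr (fun _ _ => Iff.rfl) (fun _ _ _ => rfl)
  -- the polynomial of `G - r - v` in `V`-world form
  have hT : ∀ (v : V) (hv : v ≠ r)
      (instT : Fintype ↥{w : ↥{u : V | u ≠ r} | w ≠ ⟨v, hv⟩}),
      @matchingPolynomial _ instT ((G.induce {u : V | u ≠ r}).induce
        {w : ↥{u : V | u ≠ r} | w ≠ ⟨v, hv⟩}) z =
      msum G (fun M => ∀ e ∈ M, ∀ x ∈ e, x ≠ r ∧ x ≠ v)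
        (fun m => z ^ (n - 2 - 2 * m)) := by
    intro v hv instT
    rw [matchingPolynomial_induce_msum (G.induce {u : V | u ≠ r}) _ z
      (instS := instT)]
    have hcT : @Fintype.card ↥{w : ↥{u : V | u ≠ r} | w ≠ ⟨v, hv⟩} instT = n - 2 := by
      rw [card_ne_aux (⟨v, hv⟩ : ↥{u : V | u ≠ r}), hcardS]
      omega
    rw [hcT]
    have hQ : ∀ e : Sym2 ↥{u : V | u ≠ r},
        (∀ x ∈ e, x ∈ {w : ↥{u : V | u ≠ r} | w ≠ ⟨v, hv⟩}) ↔
        (∀ y ∈ e.map Subtype.val, y ≠ r ∧ y ≠ v) := by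
      intro e
      constructor
      · intro h y hy
        obtain ⟨a, ha, rfl⟩ := Sym2.mem_map.1 hy
        exact ⟨a.2, fun hva => (h a ha) (Subtype.ext hva)⟩
      · intro h x hx
        intro hcon
        exact (h x.val (Sym2.mem_map.2 ⟨x, hx, rfl⟩)).2 (congrArg Subtype.val hcon)
    rw [msum_induce G {u : V | u ≠ r} (fun m => z ^ (n - 2 - 2 * m))
      (fun e => ∀ y ∈ e, y ≠ r ∧ y ≠ v)
      (fun e => ∀ x ∈ e, x ∈ {w : ↥{u : V | u ≠ r} | w ≠ ⟨v, hv⟩}) hQ]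
    refine msum_congr (fun M _ => ?_) (fun _ _ _ => rfl)
    constructor
    · intro h e he x hx
      exact (h e he).2 x hx
    · intro h e he
      exact ⟨fun x hx => (h e he x hx).1, h e he⟩
  -- the recursion for the matching polynomial
  have hA : matchingPolynomial G z =
      z * msum G (fun M => ∀ e ∈ M, ∀ x ∈ e, x ≠ r)
        (fun m => z ^ (n - 1 - 2 * m)) +
      ∑ v ∈ G.neighborFinset r,
        msum G (fun M => ∀ e ∈ M, ∀ x ∈ e, x ≠ r ∧ x ≠ v)
          (fun m => z ^ (n - 2 - 2 * m)) := by
    rw [matchingPolynomial_eq_msum G z,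
      msum_split G r (G.neighborFinset r)
        (fun v => G.mem_neighborFinset r v) (fun m => z ^ (n - 2 * m))]
    congr 1
    · refine msum_factor ?_
      intro M hmat hav
      have h2m : 2 * M.card ≤ n - 1 := by
        have hle := matching_card_le hmat (S := Finset.univ.erase r)
          (fun e he x hx => Finset.mem_erase.2 ⟨hav e he x hx, Finset.mem_univ x⟩)
        rwa [Finset.card_erase_of_mem (Finset.mem_univ r), Finset.card_univ] at hle
      rw [show n - 2 * M.card = (n - 1 - 2 * M.card) + 1 by omega, pow_succ]
      ring
    · refine Finset.sum_congr rfl fun v _ => ?_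
      refine msum_congr (fun _ _ => Iff.rfl) (fun M _ _ => ?_)
      show z ^ (n - 2 * (M.card + 1)) = z ^ (n - 2 - 2 * M.card)
      congr 1
      omega
  -- positivity
  have hApos : 0 < matchingPolynomial G z := by
    rw [matchingPolynomial_eq_msum G z]
    exact msum_pos G hz trivial
  have hBpos : 0 < matchingPolynomial (G.induce {u : V | u ≠ r}) z := by
    rw [hB _]
    exact msum_pos G hz (by simp)
  have hDnonneg : ∀ v : V,
      0 ≤ msum G (fun M => ∀ e ∈ M, ∀ x ∈ e, x ≠ r ∧ x ≠ v)
        (fun m => z ^ (n - 2 - 2 * m)) := fun v => msum_nonneg G hz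
  -- rewrite the sum over attached neighbors
  have hsum : (∑ v ∈ (G.neighborFinset r).attach,
      rootExposure (G.induce {u : V | u ≠ r})
        ⟨v.1, ((G.mem_neighborFinset r v.1).mp v.2).ne'⟩ z) =
      z * (∑ v ∈ G.neighborFinset r,
        msum G (fun M => ∀ e ∈ M, ∀ x ∈ e, x ≠ r ∧ x ≠ v)
          (fun m => z ^ (n - 2 - 2 * m))) /
        matchingPolynomial (G.induce {u : V | u ≠ r}) z := by
    rw [Finset.mul_sum, Finset.sum_div,
      ← Finset.sum_attach (G.neighborFinset r) (fun v =>
        z * msum G (fun M => ∀ e ∈ M, ∀ x ∈ e, x ≠ r ∧ x ≠ v)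
          (fun m => z ^ (n - 2 - 2 * m)) /
          matchingPolynomial (G.induce {u : V | u ≠ r}) z)]
    refine Finset.sum_congr rfl fun v _ => ?_
    unfold rootExposure
    rw [hT v.1 (((G.mem_neighborFinset r v.1).mp v.2).ne') _,
      hB _]
  rw [hsum]
  unfold rootExposure
  rw [hA]
  simp only [hB]
  exact final_algebra z _ _ hz (msum_pos G hz (by simp))
    (Finset.sum_nonneg fun v _ => hDnonneg v)
end

section
/- Fix d ∈ ℕ and a complex number z with positive real part. The map φ_{z,d}(x_1,...,x_d) = z²·(z² + Σ_{i=1}^d x_i)^{-1} maps (zℍ₊)^d into zℍ₊, where ℍ₊ = {w ∈ ℂ : Re(w) > 0} and zℍ₊ = {z·w : w ∈ ℍ₊}; moreover |φ_{z,d}(x)| ≤ |z| / Re(z) for all x ∈ (zℍ₊)^d. -/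
/-- For `z` in the open right half-plane and `x₁, …, x_d ∈ zℍ₊` (where
`zℍ₊ = {z⬝w : Re(w) > 0}`), the value `φ_{z,d}(x) = z² (z² + Σᵢ xᵢ)⁻¹` again lies in
`zℍ₊`, and moreover `|φ_{z,d}(x)| ≤ |z| / Re(z)`. -/
theorem phi_maps_zH_to_zH_and_bound (d : ℕ) (z : ℂ) (hz : 0 < z.re)
    (x : Fin d → ℂ) (hx : ∀ i, ∃ w : ℂ, 0 < w.re ∧ x i = z * w) :
    (∃ w : ℂ, 0 < w.re ∧ z ^ 2 * (z ^ 2 + ∑ i, x i)⁻¹ = z * w) ∧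
      ‖z ^ 2 * (z ^ 2 + ∑ i, x i)⁻¹‖ ≤ ‖z‖ / z.re := by
  classical
  have hzne : z ≠ 0 := fun h => by simp [h] at hz
  set W : ℂ := ∑ i, Classical.choose (hx i) with hW
  have hsum : (∑ i, x i) = z * W := by
    rw [hW, Finset.mul_sum]
    exact Finset.sum_congr rfl fun i _ => (Classical.choose_spec (hx i)).2
  have hWre : 0 ≤ W.re := by
    rw [hW, Complex.re_sum]
    exact Finset.sum_nonneg fun i _ => le_of_lt (Classical.choose_spec (hx i)).1
  have hposre : 0 < (z + W).re := by
    rw [Complex.add_re]; linarith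
  have hzW : z + W ≠ 0 := fun h => by simp [h] at hposre
  have key : z ^ 2 + ∑ i, x i = z * (z + W) := by
    rw [hsum]; ring
  have hphi : z ^ 2 * (z ^ 2 + ∑ i, x i)⁻¹ = z * (z + W)⁻¹ := by
    rw [key]
    field_simp
  constructor
  · refine ⟨(z + W)⁻¹, ?_, hphi⟩
    rw [Complex.inv_re]
    exact div_pos hposre (Complex.normSq_pos.2 hzW)
  · rw [hphi, norm_mul, norm_inv]
    rw [div_eq_mul_inv]
    apply mul_le_mul_of_nonneg_left _ (norm_nonneg z)
    apply inv_anti₀ hz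
    calc z.re ≤ (z + W).re := by rw [Complex.add_re]; linarith
    _ ≤ ‖z + W‖ := Complex.re_le_norm _
end

section
/- Let G = (V,E) be a finite graph and let 0 < z < 1. Let R̄_z = (1/|V|) Σ_{∘∈V} R_z[G,∘] denote the average root-exposure probability at temperature z, and R̄_* = 1 - 2ν(G)/|V|. Then R̄_z + (|E|/|V|)·(log 2 / log z) ≤ R̄_* ≤ R̄_z. -/
open scoped Classical

/-- The matching number `ν(G)`. -/
noncomputable def matchingNumber {V : Type*} [Fintype V] (G : SimpleGraph V) : ℕ :=
  sSup {n | ∃ M : Finset (Sym2 V), IsMatching G M ∧ M.card = n}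

section Auxiliary

open Finset

set_option linter.unusedSectionVars false

variable {V : Type*} [Fintype V]

lemma edge_filter_card {G : SimpleGraph V} {e : Sym2 V}
    (he : e ∈ G.edgeSet) : (univ.filter (· ∈ e)).card = 2 := by
  induction e using Sym2.ind with
  | _ a b =>
    have hab : a ≠ b := by
      rw [SimpleGraph.mem_edgeSet] at he; exact he.ne
    have : univ.filter (· ∈ s(a,b)) = {a, b} := by
      ext v; simp [Sym2.mem_iff]
    rw [this, card_insert_of_notMem (by simp [hab]), card_singleton]

lemma matching_free_card {G : SimpleGraph V} {M : Finset (Sym2 V)}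
    (hM : IsMatching G M) :
    (univ.filter (fun v : V => ∀ e ∈ M, v ∉ e)).card = Fintype.card V - 2 * M.card ∧
      2 * M.card ≤ Fintype.card V := by
  set C : Finset V := M.biUnion (fun e => univ.filter (· ∈ e)) with hC
  have hdisj : ∀ e ∈ M, ∀ f ∈ M, e ≠ f →
      Disjoint (univ.filter (· ∈ e)) (univ.filter (· ∈ f)) := by
    intro e he f hf hef
    refine Finset.disjoint_left.2 ?_
    intro v hv hv'
    simp only [mem_filter] at hv hv'
    exact hM.2 e he f hf hef v hv.2 hv'.2
  have hCcard : C.card = 2 * M.card := by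
    rw [hC, card_biUnion hdisj]
    rw [Finset.sum_congr rfl (fun e he => edge_filter_card (hM.1 e he))]
    simp [mul_comm]
  have hfree : univ.filter (fun v : V => ∀ e ∈ M, v ∉ e) = Cᶜ := by
    ext v; simp [hC, Finset.mem_biUnion]
  constructor
  · rw [hfree, Finset.card_compl, hCcard]
  · rw [← hCcard]; exact Finset.card_le_univ C

lemma induce_edge_mem {G : SimpleGraph V} {s : Set V} {eb : Sym2 ↥s} :
    eb ∈ (G.induce s).edgeSet ↔ Sym2.map Subtype.val eb ∈ G.edgeSet := by
  induction eb using Sym2.ind with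
  | _ a b => simp [SimpleGraph.mem_edgeSet]

lemma sym2_lift {r : V} {e : Sym2 V} (he : ∀ v ∈ e, v ≠ r) :
    ∃ eb : Sym2 ↥{v : V | v ≠ r}, Sym2.map Subtype.val eb = e := by
  induction e using Sym2.ind with
  | _ a b =>
    exact ⟨s(⟨a, he a (by simp)⟩, ⟨b, he b (by simp)⟩), rfl⟩

lemma isMatching_image_iff {G : SimpleGraph V} {r : V} (Mb : Finset (Sym2 ↥{v : V | v ≠ r})) :
    IsMatching (G.induce {v : V | v ≠ r}) Mb ↔
      IsMatching G (Mb.image (Sym2.map Subtype.val)) := by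
  have hinj : Function.Injective (Sym2.map (Subtype.val : ↥{v : V | v ≠ r} → V)) :=
    Sym2.map.injective Subtype.val_injective
  constructor
  · rintro ⟨h1, h2⟩
    constructor
    · intro e he
      obtain ⟨eb, heb, rfl⟩ := Finset.mem_image.1 he
      exact induce_edge_mem.1 (h1 eb heb)
    · intro e he f hf hef v hve hvf
      obtain ⟨eb, heb, rfl⟩ := Finset.mem_image.1 he
      obtain ⟨fb, hfb, rfl⟩ := Finset.mem_image.1 hf
      obtain ⟨w, hw, rfl⟩ := Sym2.mem_map.1 hve
      obtain ⟨u, hu, huw⟩ := Sym2.mem_map.1 hvf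
      have : u = w := Subtype.val_injective huw
      subst this
      exact h2 eb heb fb hfb (fun h => hef (by rw [h])) u hw hu
  · rintro ⟨h1, h2⟩
    constructor
    · intro eb heb
      exact induce_edge_mem.2 (h1 _ (Finset.mem_image_of_mem _ heb))
    · intro eb heb fb hfb hef w hweb hwfb
      exact h2 _ (Finset.mem_image_of_mem _ heb) _ (Finset.mem_image_of_mem _ hfb)
        (fun h => hef (hinj h)) w.val (Sym2.mem_map.2 ⟨w, hweb, rfl⟩)
        (Sym2.mem_map.2 ⟨w, hwfb, rfl⟩)

lemma card_ne_subtype {r : V} : Fintype.card ↥{v : V | v ≠ r} = Fintype.card V - 1 := by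
  have : Fintype.card ↥{v : V | v ≠ r} = Fintype.card {v : V // ¬ v = r} := by
    apply Fintype.card_congr; rfl
  rw [this, Fintype.card_subtype_compl, Fintype.card_subtype_eq]

lemma induce_polynomial {G : SimpleGraph V} {r : V} (z : ℝ) :
    matchingPolynomial (G.induce {v : V | v ≠ r}) z
      = ∑ M ∈ univ.filter (fun M : Finset (Sym2 V) =>
            IsMatching G M ∧ ∀ e ∈ M, r ∉ e),
          z ^ (Fintype.card V - 1 - 2 * M.card) := by
  have hinj : Function.Injective (Sym2.map (Subtype.val : ↥{v : V | v ≠ r} → V)) :=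
    Sym2.map.injective Subtype.val_injective
  unfold matchingPolynomial
  refine Finset.sum_bij (fun Mb _ => Mb.image (Sym2.map Subtype.val)) ?_ ?_ ?_ ?_
  · intro Mb hMb
    simp only [mem_filter, mem_univ, true_and] at hMb ⊢
    refine ⟨(isMatching_image_iff Mb).1 hMb, ?_⟩
    intro e he hre
    obtain ⟨eb, heb, rfl⟩ := Finset.mem_image.1 he
    obtain ⟨w, hw, hwr⟩ := Sym2.mem_map.1 hre
    exact w.2 hwr
  · intro M₁ h₁ M₂ h₂ h
    exact Finset.image_injective hinj h
  · intro M hM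
    simp only [mem_filter, mem_univ, true_and] at hM
    obtain ⟨hMm, hMr⟩ := hM
    refine ⟨univ.filter (fun eb => Sym2.map Subtype.val eb ∈ M), ?_, ?_⟩
    · have himg : (univ.filter (fun eb : Sym2 ↥{v : V | v ≠ r} =>
          Sym2.map Subtype.val eb ∈ M)).image (Sym2.map Subtype.val) = M := by
        ext e
        constructor
        · intro he
          obtain ⟨eb, heb, rfl⟩ := Finset.mem_image.1 he
          exact (Finset.mem_filter.1 heb).2
        · intro he
          obtain ⟨eb, hebe⟩ := sym2_lift (fun v hv hvr => hMr e he (by rwa [hvr] at hv))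
          exact Finset.mem_image.2 ⟨eb, Finset.mem_filter.2 ⟨mem_univ _, hebe ▸ he⟩, hebe⟩
      simp only [mem_filter, mem_univ, true_and]
      rw [isMatching_image_iff, himg]
      exact hMm
    · ext e
      constructor
      · intro he
        obtain ⟨eb, heb, rfl⟩ := Finset.mem_image.1 he
        exact (Finset.mem_filter.1 heb).2
      · intro he
        obtain ⟨eb, hebe⟩ := sym2_lift (fun v hv hvr => hMr e he (by rwa [hvr] at hv))
        exact Finset.mem_image.2 ⟨eb, Finset.mem_filter.2 ⟨mem_univ _, hebe ▸ he⟩, hebe⟩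
  · intro Mb hMb
    rw [Finset.card_image_of_injective _ hinj, card_ne_subtype]

lemma sum_induce_polys (G : SimpleGraph V) (z : ℝ) :
    ∑ v : V, z * matchingPolynomial (G.induce {u : V | u ≠ v}) z
      = ∑ M ∈ univ.filter (fun M : Finset (Sym2 V) => IsMatching G M),
          ((Fintype.card V - 2 * M.card : ℕ) : ℝ) * z ^ (Fintype.card V - 2 * M.card) := by
  have step1 : ∀ v : V, z * matchingPolynomial (G.induce {u : V | u ≠ v}) z
      = ∑ M ∈ univ.filter (fun M : Finset (Sym2 V) => IsMatching G M),
          (if ∀ e ∈ M, v ∉ e then z * z ^ (Fintype.card V - 1 - 2 * M.card) else 0) := by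
    intro v
    rw [induce_polynomial, Finset.mul_sum]
    rw [show (univ.filter (fun M : Finset (Sym2 V) => IsMatching G M ∧ ∀ e ∈ M, v ∉ e))
        = (univ.filter (fun M : Finset (Sym2 V) => IsMatching G M)).filter
            (fun M => ∀ e ∈ M, v ∉ e) by rw [Finset.filter_filter]]
    rw [Finset.sum_filter]
  calc ∑ v : V, z * matchingPolynomial (G.induce {u : V | u ≠ v}) z
      = ∑ v : V, ∑ M ∈ univ.filter (fun M : Finset (Sym2 V) => IsMatching G M),
          (if ∀ e ∈ M, v ∉ e then z * z ^ (Fintype.card V - 1 - 2 * M.card) else 0) := by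
        exact Finset.sum_congr rfl (fun v _ => step1 v)
    _ = ∑ M ∈ univ.filter (fun M : Finset (Sym2 V) => IsMatching G M), ∑ v : V,
          (if ∀ e ∈ M, v ∉ e then z * z ^ (Fintype.card V - 1 - 2 * M.card) else 0) :=
        Finset.sum_comm
    _ = _ := by
        refine Finset.sum_congr rfl ?_
        intro M hM
        have hMm : IsMatching G M := (Finset.mem_filter.1 hM).2
        obtain ⟨hfc, hle⟩ := matching_free_card hMm
        rw [← Finset.sum_filter, Finset.sum_const, hfc]
        rcases Nat.eq_zero_or_pos (Fintype.card V - 2 * M.card) with h0 | hpos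
        · simp [h0]
        · have h1 : 2 * M.card + 1 ≤ Fintype.card V := by omega
          have : z * z ^ (Fintype.card V - 1 - 2 * M.card)
              = z ^ (Fintype.card V - 2 * M.card) := by
            rw [← pow_succ']
            congr 1
            omega
          rw [this, nsmul_eq_mul]

variable (G : SimpleGraph V)

lemma empty_isMatching : IsMatching G (∅ : Finset (Sym2 V)) := by
  constructor <;> simp

lemma matchingSet_bdd : BddAbove {n | ∃ M : Finset (Sym2 V), IsMatching G M ∧ M.card = n} := by
  refine ⟨Fintype.card (Sym2 V), ?_⟩
  rintro n ⟨M, -, rfl⟩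
  exact Finset.card_le_univ M

lemma exists_max_matching :
    ∃ M : Finset (Sym2 V), IsMatching G M ∧ M.card = matchingNumber G :=
  Nat.sSup_mem (s := {n | ∃ M : Finset (Sym2 V), IsMatching G M ∧ M.card = n})
    ⟨0, ⟨∅, empty_isMatching G, by simp⟩⟩ (matchingSet_bdd G)

lemma card_le_matchingNumber {M : Finset (Sym2 V)} (hM : IsMatching G M) :
    M.card ≤ matchingNumber G :=
  le_csSup (matchingSet_bdd G) ⟨M, hM, rfl⟩

lemma matchingPolynomial_pos {z : ℝ} (hz : 0 < z) : 0 < matchingPolynomial G z := by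
  refine Finset.sum_pos (fun M _ => pow_pos hz _) ⟨∅, ?_⟩
  simp [empty_isMatching G]

lemma matchingPolynomial_ge {z : ℝ} (hz : 0 < z) :
    z ^ (Fintype.card V - 2 * matchingNumber G) ≤ matchingPolynomial G z := by
  obtain ⟨M, hM, hcard⟩ := exists_max_matching G
  have : z ^ (Fintype.card V - 2 * M.card) ≤ matchingPolynomial G z :=
    Finset.single_le_sum (f := fun M : Finset (Sym2 V) => z ^ (Fintype.card V - 2 * M.card))
      (fun M _ => le_of_lt (pow_pos hz _)) (by simp [hM])
  rwa [hcard] at this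

lemma matchingPolynomial_one :
    matchingPolynomial G 1
      = ((univ.filter (fun M : Finset (Sym2 V) => IsMatching G M)).card : ℝ) := by
  unfold matchingPolynomial; simp

lemma matchingPolynomial_one_le : matchingPolynomial G 1 ≤ 2 ^ G.edgeFinset.card := by
  have h2 : (univ.filter (fun M : Finset (Sym2 V) => IsMatching G M)) ⊆
      G.edgeFinset.powerset := by
    intro M hM
    rw [Finset.mem_powerset]
    intro e he
    exact SimpleGraph.mem_edgeFinset.2 ((Finset.mem_filter.1 hM).2.1 e he)
  rw [matchingPolynomial_one]
  calc ((univ.filter (fun M : Finset (Sym2 V) => IsMatching G M)).card : ℝ)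
      ≤ (G.edgeFinset.powerset.card : ℝ) := by exact_mod_cast Finset.card_le_card h2
    _ = 2 ^ G.edgeFinset.card := by rw [Finset.card_powerset]; push_cast; ring

lemma jensen_step {z : ℝ} (hz0 : 0 < z) (hz1 : z < 1) :
    (∑ M ∈ univ.filter (fun M : Finset (Sym2 V) => IsMatching G M),
        ((Fintype.card V - 2 * M.card : ℕ) : ℝ) * z ^ (Fintype.card V - 2 * M.card))
      / matchingPolynomial G z * Real.log z⁻¹
    ≤ Real.log (matchingPolynomial G 1) - Real.log (matchingPolynomial G z) := by
  set t := univ.filter (fun M : Finset (Sym2 V) => IsMatching G M) with ht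
  set Pz := matchingPolynomial G z with hPz
  have hPzpos : 0 < Pz := matchingPolynomial_pos G hz0
  set L := Real.log z⁻¹ with hL
  set w : Finset (Sym2 V) → ℝ := fun M => z ^ (Fintype.card V - 2 * M.card) / Pz with hw
  set p : Finset (Sym2 V) → ℝ := fun M => ((Fintype.card V - 2 * M.card : ℕ) : ℝ) * L with hp
  have hw0 : ∀ M ∈ t, 0 ≤ w M := fun M _ => div_nonneg (le_of_lt (pow_pos hz0 _)) hPzpos.le
  have hw1 : ∑ M ∈ t, w M = 1 := by
    rw [hw, ← Finset.sum_div, hPz]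
    exact div_self (ne_of_gt hPzpos)
  have hjen := ConvexOn.map_sum_le convexOn_exp hw0 hw1
    (fun M _ => Set.mem_univ (p M))
  have hrhs : ∑ M ∈ t, w M • Real.exp (p M) = matchingPolynomial G 1 / Pz := by
    have key : ∀ M ∈ t, w M • Real.exp (p M) = 1 / Pz := by
      intro M _
      have he : Real.exp (p M) = (z⁻¹) ^ (Fintype.card V - 2 * M.card) := by
        rw [hp]
        simp only []
        rw [Real.exp_nat_mul, hL, Real.exp_log (inv_pos.2 hz0)]
      rw [he, hw, smul_eq_mul]
      simp only []
      rw [div_mul_eq_mul_div, ← mul_pow, mul_inv_cancel₀ (ne_of_gt hz0), one_pow]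
    rw [Finset.sum_congr rfl key, Finset.sum_const, matchingPolynomial_one, ht]
    rw [nsmul_eq_mul, mul_one_div]
  have hlhs : ∑ M ∈ t, w M • p M
      = (∑ M ∈ t, ((Fintype.card V - 2 * M.card : ℕ) : ℝ)
          * z ^ (Fintype.card V - 2 * M.card)) / Pz * L := by
    rw [Finset.sum_div, Finset.sum_mul]
    refine Finset.sum_congr rfl ?_
    intro M _
    rw [hw, hp, smul_eq_mul]
    ring
  rw [hlhs] at hjen
  rw [hrhs] at hjen
  have h1pos : 0 < matchingPolynomial G 1 := matchingPolynomial_pos G one_pos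
  have := (Real.le_log_iff_exp_le (div_pos h1pos hPzpos)).2 hjen
  rwa [Real.log_div (ne_of_gt h1pos) (ne_of_gt hPzpos)] at this

end Auxiliary

/-- Uniform continuity around the zero-temperature point: for `0 < z < 1`,
`R̄_z + (|E|/|V|)(log 2 / log z) ≤ R̄_* ≤ R̄_z`, where `R̄_z` is the average
root-exposure probability and `R̄_* = 1 - 2ν(G)/|V|`. -/
theorem uniform_control_zero_temperature {V : Type*} [Fintype V] [Nonempty V]
    (G : SimpleGraph V) (z : ℝ) (hz0 : 0 < z) (hz1 : z < 1) :
    (∑ v : V, rootExposure G v z) / (Fintype.card V : ℝ)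
        + ((G.edgeFinset.card : ℝ) / (Fintype.card V : ℝ)) * (Real.log 2 / Real.log z)
      ≤ 1 - 2 * (matchingNumber G : ℝ) / (Fintype.card V : ℝ) ∧
    1 - 2 * (matchingNumber G : ℝ) / (Fintype.card V : ℝ)
      ≤ (∑ v : V, rootExposure G v z) / (Fintype.card V : ℝ) := by
  classical
  set n := Fintype.card V with hn
  have hnpos : (0:ℝ) < n := by
    have := Fintype.card_pos (α := V); exact_mod_cast this
  set ν := matchingNumber G with hν
  set t := Finset.univ.filter (fun M : Finset (Sym2 V) => IsMatching G M) with ht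
  set Pz := matchingPolynomial G z with hPz
  have hPzpos : 0 < Pz := matchingPolynomial_pos G hz0
  set S := ∑ M ∈ t, ((n - 2 * M.card : ℕ) : ℝ) * z ^ (n - 2 * M.card) with hS
  have hsum : ∑ v : V, rootExposure G v z = S / Pz := by
    unfold rootExposure
    rw [← Finset.sum_div, sum_induce_polys G z]
  have h2νn : 2 * ν ≤ n := by
    obtain ⟨M, hM, hcard⟩ := exists_max_matching G
    have := (matching_free_card hM).2
    omega
  have hmcast : ((n - 2 * ν : ℕ) : ℝ) = (n : ℝ) - 2 * ν := by
    push_cast [Nat.cast_sub h2νn]; ring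
  have hlow : (n : ℝ) - 2 * ν ≤ S / Pz := by
    rw [le_div_iff₀ hPzpos]
    calc ((n:ℝ) - 2 * ν) * Pz = ∑ M ∈ t, ((n - 2*ν : ℕ) : ℝ) * z ^ (n - 2 * M.card) := by
          rw [hPz]; unfold matchingPolynomial
          rw [Finset.mul_sum, hmcast]
      _ ≤ S := by
          refine Finset.sum_le_sum ?_
          intro M hM
          have h1 : n - 2 * ν ≤ n - 2 * M.card :=
            Nat.sub_le_sub_left (Nat.mul_le_mul_left 2
              (card_le_matchingNumber G (Finset.mem_filter.1 hM).2)) n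
          have : ((n - 2*ν : ℕ) : ℝ) ≤ ((n - 2 * M.card : ℕ) : ℝ) := by exact_mod_cast h1
          exact mul_le_mul_of_nonneg_right this (le_of_lt (pow_pos hz0 _))
  set L := Real.log z⁻¹ with hLdef
  have hlogz : Real.log z < 0 := Real.log_neg hz0 hz1
  have hLeq : L = - Real.log z := Real.log_inv z
  have hLpos : 0 < L := by rw [hLeq]; linarith
  have hupper : S / Pz * L ≤ (G.edgeFinset.card : ℝ) * Real.log 2 + ((n:ℝ) - 2 * ν) * L := by
    have hjen := jensen_step G hz0 hz1
    have h1pos : 0 < matchingPolynomial G 1 := matchingPolynomial_pos G one_pos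
    have hlog1 : Real.log (matchingPolynomial G 1)
        ≤ (G.edgeFinset.card : ℝ) * Real.log 2 := by
      calc Real.log (matchingPolynomial G 1) ≤ Real.log (2 ^ G.edgeFinset.card) :=
            Real.log_le_log h1pos (matchingPolynomial_one_le G)
        _ = (G.edgeFinset.card : ℝ) * Real.log 2 := by rw [Real.log_pow]
    have hlogPz : -Real.log Pz ≤ ((n:ℝ) - 2 * ν) * L := by
      have h1 : Real.log (z ^ (n - 2 * ν)) ≤ Real.log Pz :=
        Real.log_le_log (pow_pos hz0 _) (matchingPolynomial_ge G hz0)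
      rw [Real.log_pow] at h1
      have h2 : ((n - 2*ν : ℕ) : ℝ) * Real.log z ≤ Real.log Pz := h1
      rw [hmcast] at h2
      rw [hLeq]
      nlinarith
    calc S / Pz * L ≤ Real.log (matchingPolynomial G 1) - Real.log Pz := hjen
      _ ≤ (G.edgeFinset.card : ℝ) * Real.log 2 + ((n:ℝ) - 2 * ν) * L := by linarith
  have key : S / Pz + (G.edgeFinset.card : ℝ) * (Real.log 2 / Real.log z)
      ≤ (n:ℝ) - 2 * ν := by
    have hE : (G.edgeFinset.card : ℝ) * (Real.log 2 / Real.log z)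
        = -((G.edgeFinset.card : ℝ) * Real.log 2 / L) := by
      rw [hLeq, div_neg, mul_div_assoc, neg_neg]
    rw [hE]
    have h3 : (S / Pz - (G.edgeFinset.card : ℝ) * Real.log 2 / L) * L
        ≤ ((n:ℝ) - 2 * ν) * L := by
      rw [sub_mul, div_mul_cancel₀ _ (ne_of_gt hLpos)]
      linarith
    have h4 := le_of_mul_le_mul_right h3 hLpos
    linarith
  have expand2 : 1 - 2 * (ν : ℝ) / (n:ℝ) = ((n:ℝ) - 2 * ν) / (n:ℝ) := by
    field_simp
  constructor
  · rw [hsum, expand2]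
    have expand : S / Pz / (n:ℝ) + ((G.edgeFinset.card : ℝ) / (n:ℝ)) * (Real.log 2 / Real.log z)
        = (S / Pz + (G.edgeFinset.card : ℝ) * (Real.log 2 / Real.log z)) / (n:ℝ) := by
      rw [div_mul_eq_mul_div, ← add_div]
    rw [expand]
    exact (div_le_div_iff_of_pos_right hnpos).2 key
  · rw [hsum, expand2]
    exact (div_le_div_iff_of_pos_right hnpos).2 hlow
end

section
/- For a finite rooted graph (G,∘), the root-exposure probability at temperature z > 0 is a non-decreasing function of z ∈ (0,∞); i.e., z ↦ z·P_{G-∘}(z)/P_G(z) is non-decreasing on (0,∞), where P denotes the matching polynomial. -/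
open scoped Classical

open Finset

lemma IsMatching.subset {V : Type*} {G : SimpleGraph V} {M M' : Finset (Sym2 V)}
    (h : IsMatching G M) (hs : M' ⊆ M) : IsMatching G M' :=
  ⟨fun e he => h.1 e (hs he), fun e he f hf hef v hv => h.2 e (hs he) f (hs hf) hef v hv⟩

noncomputable def mps {W : Type*} [Fintype W] (G : SimpleGraph W) (s : Finset W) (t : ℝ) : ℝ :=
  ∑ M ∈ Finset.univ.filter
      (fun M : Finset (Sym2 W) => IsMatching G M ∧ ∀ e ∈ M, ∀ v ∈ e, v ∈ s),
    t ^ M.card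

lemma mps_pos {W : Type*} [Fintype W] (G : SimpleGraph W) (s : Finset W) {t : ℝ}
    (ht : 0 < t) : 0 < mps G s t := by
  apply Finset.sum_pos
  · intro M _; positivity
  · refine ⟨∅, ?_⟩
    exact Finset.mem_filter.mpr ⟨Finset.mem_univ _, by simp [IsMatching]⟩

lemma mps_rec {W : Type*} [Fintype W] (G : SimpleGraph W) (s : Finset W) {r : W}
    (hr : r ∈ s) (t : ℝ) :
    mps G s t = mps G (s.erase r) t
      + t * ∑ v ∈ G.neighborFinset r ∩ s.erase r, mps G ((s.erase r).erase v) t := by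
  classical
  rw [mps, ← Finset.sum_filter_add_sum_filter_not _ (fun M => ∀ e ∈ M, r ∉ e)]
  congr 1
  · -- matchings not covering r
    rw [mps]
    apply Finset.sum_congr _ (fun _ _ => rfl)
    ext M
    simp only [Finset.mem_filter, Finset.mem_univ, true_and]
    constructor
    · rintro ⟨⟨hM, hsupp⟩, hnr⟩
      refine ⟨hM, fun e he v hv => Finset.mem_erase.mpr ⟨?_, hsupp e he v hv⟩⟩
      rintro rfl; exact hnr e he hv
    · rintro ⟨hM, hsupp⟩
      exact ⟨⟨hM, fun e he v hv => Finset.mem_of_mem_erase (hsupp e he v hv)⟩,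
        fun e he hre => (Finset.mem_erase.mp (hsupp e he r hre)).1 rfl⟩
  · -- matchings covering r
    have hset : ((Finset.univ.filter
        (fun M : Finset (Sym2 W) => IsMatching G M ∧ ∀ e ∈ M, ∀ v ∈ e, v ∈ s)).filter
          (fun M => ¬ ∀ e ∈ M, r ∉ e))
        = (G.neighborFinset r ∩ s.erase r).biUnion
            (fun v => Finset.univ.filter
              (fun M : Finset (Sym2 W) => (IsMatching G M ∧ ∀ e ∈ M, ∀ v ∈ e, v ∈ s)
                ∧ s(r, v) ∈ M)) := by
      ext M
      simp only [Finset.mem_filter, Finset.mem_univ, true_and, Finset.mem_biUnion,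
        Finset.mem_inter, SimpleGraph.mem_neighborFinset, Finset.mem_erase]
      constructor
      · rintro ⟨⟨hM, hsupp⟩, hcov⟩
        push_neg at hcov
        obtain ⟨e, he, hre⟩ := hcov
        obtain ⟨v, rfl⟩ := Sym2.mem_iff_exists.mp hre
        have hadj : G.Adj r v := (SimpleGraph.mem_edgeSet G).mp (hM.1 _ he)
        exact ⟨v, ⟨hadj, hadj.ne', hsupp _ he v (Sym2.mem_mk_right r v)⟩, ⟨hM, hsupp⟩, he⟩
      · rintro ⟨v, _, ⟨hM, hsupp⟩, hmem⟩
        refine ⟨⟨hM, hsupp⟩, ?_⟩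
        push_neg
        exact ⟨s(r, v), hmem, Sym2.mem_mk_left r v⟩
    rw [hset, Finset.sum_biUnion, Finset.mul_sum]
    · apply Finset.sum_congr rfl
      intro v hv
      simp only [Finset.mem_inter, SimpleGraph.mem_neighborFinset, Finset.mem_erase] at hv
      obtain ⟨hadj, hvr, hvs⟩ := hv
      rw [mps]
      rw [Finset.mul_sum]
      refine Finset.sum_nbij' (fun M => M.erase s(r, v)) (fun M => insert s(r, v) M)
        ?_ ?_ ?_ ?_ ?_
      · -- erase maps into target
        intro M hM
        simp only [Finset.mem_filter, Finset.mem_univ, true_and] at hM ⊢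
        obtain ⟨⟨hmat, hsupp⟩, hmem⟩ := hM
        refine ⟨hmat.subset (Finset.erase_subset _ _), ?_⟩
        intro e he w hw
        have he' : e ∈ M := Finset.mem_of_mem_erase he
        have hne : e ≠ s(r, v) := (Finset.mem_erase.mp he).1
        have hwrv : w ∉ s(r, v) := hmat.2 e he' _ hmem hne w hw
        simp only [Sym2.mem_iff] at hwrv
        push_neg at hwrv
        exact Finset.mem_erase.mpr ⟨hwrv.2, Finset.mem_erase.mpr ⟨hwrv.1, hsupp e he' w hw⟩⟩
      · -- insert maps back
        intro M hM
        simp only [Finset.mem_filter, Finset.mem_univ, true_and] at hM ⊢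
        obtain ⟨hmat, hsupp⟩ := hM
        have hnotmem : s(r, v) ∉ M := by
          intro h
          have := hsupp _ h r (Sym2.mem_mk_left r v)
          exact (Finset.mem_erase.mp (Finset.mem_of_mem_erase this)).1 rfl
        have hsupp' : ∀ e ∈ M, ∀ w ∈ e, w ∉ s(r, v) := by
          intro e he w hw
          have := hsupp e he w hw
          simp only [Sym2.mem_iff]
          push_neg
          exact ⟨(Finset.mem_erase.mp (Finset.mem_of_mem_erase this)).1,
            (Finset.mem_erase.mp this).1⟩
        constructor
        constructor
        · constructor
          · intro e he
            rcases Finset.mem_insert.mp he with rfl | he'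
            · exact (SimpleGraph.mem_edgeSet G).mpr hadj
            · exact hmat.1 e he'
          · intro e he f hf hef w hw hwf
            rcases Finset.mem_insert.mp he with rfl | he' <;>
              rcases Finset.mem_insert.mp hf with rfl | hf'
            · exact hef rfl
            · exact hsupp' f hf' w hwf hw
            · exact hsupp' e he' w hw hwf
            · exact hmat.2 e he' f hf' hef w hw hwf
        · intro e he w hw
          rcases Finset.mem_insert.mp he with rfl | he'
          · rcases Sym2.mem_iff.mp hw with rfl | rfl
            · exact hr
            · exact hvs
          · exact Finset.mem_of_mem_erase
              (Finset.mem_of_mem_erase (hsupp e he' w hw))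
        · exact Finset.mem_insert_self _ _
      · -- left inverse
        intro M hM
        simp only [Finset.mem_filter, Finset.mem_univ, true_and] at hM
        exact Finset.insert_erase hM.2
      · -- right inverse
        intro M hM
        simp only [Finset.mem_filter, Finset.mem_univ, true_and] at hM
        apply Finset.erase_insert
        intro h
        have := hM.2 _ h r (Sym2.mem_mk_left r v)
        exact (Finset.mem_erase.mp (Finset.mem_of_mem_erase this)).1 rfl
      · -- values
        intro M hM
        simp only [Finset.mem_filter, Finset.mem_univ, true_and] at hM
        rw [Finset.card_erase_of_mem hM.2]
        have hpos : 1 ≤ M.card := Finset.card_pos.mpr ⟨_, hM.2⟩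
        rw [← pow_succ']
        congr 1
        omega
    · -- pairwise disjoint
      intro v hv w hw hvw
      have : ∀ M : Finset (Sym2 W),
          ((IsMatching G M ∧ ∀ e ∈ M, ∀ x ∈ e, x ∈ s) ∧ s(r, v) ∈ M) →
          ¬(((IsMatching G M ∧ ∀ e ∈ M, ∀ x ∈ e, x ∈ s) ∧ s(r, w) ∈ M)) := by
        rintro M ⟨⟨hM, hsupp⟩, hmv⟩ ⟨_, hmw⟩
        have hne : s(r, v) ≠ s(r, w) := by
          intro h
          rw [Sym2.eq_iff] at h
          rcases h with ⟨-, h2⟩ | ⟨h1, h2⟩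
          · exact hvw h2
          · subst h2
            simp only [Finset.mem_coe, Finset.mem_inter, SimpleGraph.mem_neighborFinset] at hv
            exact (G.irrefl hv.1)
        exact hM.2 _ hmv _ hmw hne r (Sym2.mem_mk_left r v) (Sym2.mem_mk_left r w)
      simp only [Function.onFun, Finset.disjoint_left, Finset.mem_filter, Finset.mem_univ,
        true_and]
      intro M h1 h2
      exact this M h1 h2

lemma mps_ratio_antitone {W : Type*} [Fintype W] (G : SimpleGraph W) :
    ∀ n : ℕ, ∀ s : Finset W, s.card ≤ n → ∀ r ∈ s,
      AntitoneOn (fun t => mps G (s.erase r) t / mps G s t) (Set.Ioi (0:ℝ)) := by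
  intro n
  induction n with
  | zero =>
    intro s hs r hr
    have : s = ∅ := Finset.card_eq_zero.mp (Nat.le_zero.mp hs)
    subst this
    simp at hr
  | succ n ih =>
    intro s hs r hr t1 ht1 t2 ht2 h12
    simp only [Set.mem_Ioi] at ht1 ht2
    set s' := s.erase r with hs'def
    set A := G.neighborFinset r ∩ s' with hAdef
    -- the function g v t = t * mps (s'.erase v) t / mps s' t
    set g : W → ℝ → ℝ := fun v t => t * mps G (s'.erase v) t / mps G s' t with hgdef
    have hgpos : ∀ v, ∀ t : ℝ, 0 < t → 0 < g v t := fun v t ht =>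
      div_pos (mul_pos ht (mps_pos G _ ht)) (mps_pos G _ ht)
    -- pointwise identity for Q
    have Qid : ∀ t : ℝ, 0 < t →
        mps G s' t / mps G s t = (1 + ∑ v ∈ A, g v t)⁻¹ := by
      intro t ht
      have hrec := mps_rec G s hr t
      have ha : mps G s' t ≠ 0 := (mps_pos G s' ht).ne'
      have hsum : (1 + ∑ v ∈ A, g v t)
          = (mps G s' t + t * ∑ v ∈ A, mps G (s'.erase v) t) / mps G s' t := by
        simp only [hgdef]
        rw [← Finset.sum_div, ← Finset.mul_sum]
        field_simp
      rw [hrec, hsum, inv_div]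
    -- pointwise identity for (g v t)⁻¹
    have gid : ∀ v ∈ A, ∀ t : ℝ, 0 < t →
        (g v t)⁻¹ = t⁻¹ + ∑ w ∈ G.neighborFinset v ∩ (s'.erase v),
          mps G ((s'.erase v).erase w) t / mps G (s'.erase v) t := by
      intro v hv t ht
      have hv' : v ∈ s' := (Finset.mem_inter.mp hv).2
      have hrec := mps_rec G s' hv' t
      have hc : mps G (s'.erase v) t ≠ 0 := (mps_pos G _ ht).ne'
      have htne : t ≠ 0 := ht.ne'
      simp only [hgdef]
      rw [inv_div, hrec, ← Finset.sum_div]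
      field_simp
    -- each g v is monotone between t1 and t2
    have hg : ∀ v ∈ A, g v t1 ≤ g v t2 := by
      intro v hv
      have hv' : v ∈ s' := (Finset.mem_inter.mp hv).2
      have hcard : (s'.erase v).card ≤ n := by
        have h1 : s'.card ≤ s.card - 1 := by
          rw [hs'def, Finset.card_erase_of_mem hr]
        have h2 : (s'.erase v).card = s'.card - 1 := Finset.card_erase_of_mem hv'
        have h3 : 1 ≤ s.card := Finset.card_pos.mpr ⟨r, hr⟩
        have h4 : 1 ≤ s'.card := Finset.card_pos.mpr ⟨v, hv'⟩
        omega
      have hinv : (g v t2)⁻¹ ≤ (g v t1)⁻¹ := by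
        rw [gid v hv t1 ht1, gid v hv t2 ht2]
        apply add_le_add
        · exact inv_anti₀ ht1 h12
        · apply Finset.sum_le_sum
          intro w hw
          have hw' : w ∈ s'.erase v := (Finset.mem_inter.mp hw).2
          exact ih (s'.erase v) hcard w hw' (Set.mem_Ioi.mpr ht1) (Set.mem_Ioi.mpr ht2) h12
      have := inv_anti₀ (inv_pos.mpr (hgpos v t2 ht2)) hinv
      simpa using this
    -- conclude
    show mps G s' t2 / mps G s t2 ≤ mps G s' t1 / mps G s t1
    rw [Qid t1 ht1, Qid t2 ht2]
    apply inv_anti₀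
    · have : (0:ℝ) ≤ ∑ v ∈ A, g v t1 :=
        Finset.sum_nonneg fun v hv => (hgpos v t1 ht1).le
      linarith
    · exact add_le_add le_rfl (Finset.sum_le_sum hg)

lemma matching_card_le_s12 {W : Type*} [Fintype W] {G : SimpleGraph W} {M : Finset (Sym2 W)}
    (hM : IsMatching G M) : 2 * M.card ≤ Fintype.card W := by
  classical
  set f : Sym2 W → Finset W :=
    fun e => Sym2.lift ⟨fun a b => {a, b}, fun a b => Finset.pair_comm a b⟩ e with hf
  have hmem : ∀ (e : Sym2 W) (x : W), x ∈ f e ↔ x ∈ e := by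
    intro e
    induction e using Sym2.ind with
    | _ a b => intro x; simp [hf, Sym2.mem_iff]
  have hcard2 : ∀ e ∈ M, (f e).card = 2 := by
    intro e he
    induction e using Sym2.ind with
    | _ a b =>
      have hab : a ≠ b := ((SimpleGraph.mem_edgeSet G).mp (hM.1 _ he)).ne
      simp [hf, Finset.card_pair hab]
  have hdisj : ∀ e ∈ M, ∀ e' ∈ M, e ≠ e' → Disjoint (f e) (f e') := by
    intro e he e' he' hne
    rw [Finset.disjoint_left]
    intro x hx hx'
    exact hM.2 e he e' he' hne x ((hmem e x).mp hx) ((hmem e' x).mp hx')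
  calc 2 * M.card = ∑ e ∈ M, (f e).card := by
        rw [Finset.sum_congr rfl hcard2, Finset.sum_const, smul_eq_mul, mul_comm]
    _ = (M.biUnion f).card := (Finset.card_biUnion hdisj).symm
    _ ≤ Fintype.card W := by simpa using Finset.card_le_univ (M.biUnion f)

lemma matchingPolynomial_eq {W : Type*} [Fintype W] (H : SimpleGraph W) {z : ℝ}
    (hz : 0 < z) :
    matchingPolynomial H z = z ^ Fintype.card W * mps H Finset.univ ((z ^ 2)⁻¹) := by
  rw [matchingPolynomial, mps, Finset.mul_sum]
  apply Finset.sum_congr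
  · apply Finset.filter_congr
    intro M _
    simp only [Finset.mem_univ, imp_true_iff, and_true]
  · intro M hM
    have hMm : IsMatching H M := (Finset.mem_filter.mp hM).2.1
    have hle := matching_card_le_s12 hMm
    have hzne : z ≠ 0 := hz.ne'
    have h1 : ((z ^ 2)⁻¹) ^ M.card = (z ^ (2 * M.card))⁻¹ := by
      rw [inv_pow, ← pow_mul]
    rw [h1, pow_sub₀ z hzne hle]

lemma mps_induce {W : Type*} [Fintype W] (G : SimpleGraph W) (s : Set W) [Fintype ↥s]
    [DecidablePred (· ∈ s)] (t : ℝ) :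
    mps (G.induce s) Finset.univ t = mps G s.toFinset t := by
  classical
  rw [mps, mps]
  have hinj : Function.Injective (Sym2.map (Subtype.val : ↥s → W)) :=
    Sym2.map.injective Subtype.val_injective
  refine Finset.sum_nbij' (fun M => M.image (Sym2.map (Subtype.val : ↥s → W)))
    (fun M => Finset.univ.filter
      (fun e : Sym2 ↥s => Sym2.map (Subtype.val : ↥s → W) e ∈ M)) ?_ ?_ ?_ ?_ ?_
  · -- image lands in target
    intro M hM
    simp only [Finset.mem_filter, Finset.mem_univ, true_and] at hM ⊢
    obtain ⟨⟨hedge, hpair⟩, -⟩ := hM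
    refine ⟨⟨?_, ?_⟩, ?_⟩
    · intro e' he'
      obtain ⟨e, he, rfl⟩ := Finset.mem_image.mp he'
      have := hedge e he
      induction e using Sym2.ind with
      | _ a b =>
        simp only [SimpleGraph.mem_edgeSet, SimpleGraph.comap_adj,
          Function.Embedding.coe_subtype] at this
        simpa [SimpleGraph.mem_edgeSet] using this
    · intro e' he' f' hf' hne v hv hvf
      obtain ⟨e, he, rfl⟩ := Finset.mem_image.mp he'
      obtain ⟨f, hf, rfl⟩ := Finset.mem_image.mp hf'
      obtain ⟨a, ha, rfl⟩ := Sym2.mem_map.mp hv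
      obtain ⟨b, hb, hba⟩ := Sym2.mem_map.mp hvf
      have hab : b = a := Subtype.val_injective hba
      subst hab
      have hef : e ≠ f := fun h => hne (by rw [h])
      exact hpair e he f hf hef b ha hb
    · intro e' he' v hv
      obtain ⟨e, he, rfl⟩ := Finset.mem_image.mp he'
      obtain ⟨a, ha, rfl⟩ := Sym2.mem_map.mp hv
      exact Set.mem_toFinset.mpr a.2
  · -- preimage lands in source
    intro M hM
    simp only [Finset.mem_filter, Finset.mem_univ, true_and] at hM ⊢
    obtain ⟨⟨hedge, hpair⟩, hsupp⟩ := hM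
    refine ⟨⟨?_, ?_⟩, ?_⟩
    · intro e he
      simp only [Finset.mem_filter, Finset.mem_univ, true_and] at he
      have := hedge _ he
      induction e using Sym2.ind with
      | _ a b =>
        simp only [Sym2.map_pair_eq, SimpleGraph.mem_edgeSet] at this
        simpa [SimpleGraph.mem_edgeSet] using this
    · intro e he f hf hne v hv hvf
      simp only [Finset.mem_filter, Finset.mem_univ, true_and] at he hf
      have hne' : Sym2.map (Subtype.val : ↥s → W) e ≠ Sym2.map Subtype.val f :=
        fun h => hne (hinj h)
      exact hpair _ he _ hf hne' (↑v) (Sym2.mem_map.mpr ⟨v, hv, rfl⟩)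
        (Sym2.mem_map.mpr ⟨v, hvf, rfl⟩)
    · intro e he v hv
      trivial
  · -- left inverse
    intro M hM
    ext e
    simp only [Finset.mem_filter, Finset.mem_univ, true_and, Finset.mem_image]
    constructor
    · rintro ⟨f, hf, hfe⟩
      rwa [← hinj hfe]
    · intro he
      exact ⟨e, he, rfl⟩
  · -- right inverse
    intro M hM
    simp only [Finset.mem_filter, Finset.mem_univ, true_and] at hM
    ext e'
    simp only [Finset.mem_image, Finset.mem_filter, Finset.mem_univ, true_and]
    constructor
    · rintro ⟨e, he, rfl⟩
      exact he
    · intro he'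
      induction e' using Sym2.ind with
      | _ a b =>
        have ha : a ∈ s := Set.mem_toFinset.mp (hM.2 _ he' a (Sym2.mem_mk_left a b))
        have hb : b ∈ s := Set.mem_toFinset.mp (hM.2 _ he' b (Sym2.mem_mk_right a b))
        exact ⟨s(⟨a, ha⟩, ⟨b, hb⟩), by simpa [Sym2.map_pair_eq] using he',
          by simp [Sym2.map_pair_eq]⟩
  · -- values
    intro M hM
    rw [Finset.card_image_of_injective M hinj]

lemma setOf_ne_toFinset {W : Type*} [Fintype W] (r : W) [Fintype ↥({v : W | v ≠ r})] :
    ({v : W | v ≠ r} : Set W).toFinset = Finset.univ.erase r := by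
  ext v
  simp [Set.mem_toFinset]

/-- For a finite rooted graph, the root-exposure probability is non-decreasing in the
temperature `z` on `(0, ∞)`. -/
theorem rootExposure_monotone {V : Type*} [Fintype V] (G : SimpleGraph V) (r : V) :
    MonotoneOn (fun z => rootExposure G r z) (Set.Ioi (0 : ℝ)) := by
  intro z1 hz1 z2 hz2 h12
  simp only [Set.mem_Ioi] at hz1 hz2
  have hRE : ∀ z : ℝ, 0 < z → rootExposure G r z
      = mps G (Finset.univ.erase r) ((z ^ 2)⁻¹) / mps G Finset.univ ((z ^ 2)⁻¹) := by
    intro z hz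
    have hcard : Fintype.card ↥({v : V | v ≠ r}) = Fintype.card V - 1 := by
      rw [← Set.toFinset_card, setOf_ne_toFinset r,
        Finset.card_erase_of_mem (Finset.mem_univ r), Finset.card_univ]
    have h1 : 1 ≤ Fintype.card V := Fintype.card_pos_iff.mpr ⟨r⟩
    rw [rootExposure, matchingPolynomial_eq G hz, matchingPolynomial_eq _ hz, mps_induce,
      setOf_ne_toFinset r, hcard]
    have hzz : z * z ^ (Fintype.card V - 1) = z ^ Fintype.card V := by
      rw [← pow_succ']
      congr 1
      omega
    have hzn : (z : ℝ) ^ Fintype.card V ≠ 0 := by positivity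
    rw [← mul_assoc, hzz, mul_div_mul_left _ _ hzn]
  have ht1 : (0:ℝ) < (z1 ^ 2)⁻¹ := by positivity
  have ht2 : (0:ℝ) < (z2 ^ 2)⁻¹ := by positivity
  have hle : (z2 ^ 2)⁻¹ ≤ (z1 ^ 2)⁻¹ :=
    inv_anti₀ (by positivity) (pow_le_pow_left₀ hz1.le h12 2)
  have hkey := mps_ratio_antitone G Finset.univ.card Finset.univ le_rfl r (Finset.mem_univ r)
    (Set.mem_Ioi.mpr ht2) (Set.mem_Ioi.mpr ht1) hle
  simp only at hkey ⊢
  rw [hRE z1 hz1, hRE z2 hz2]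
  exact hkey
end

section
/- For each k ≥ 3, the function z ↦ z(1 − e^{−z}) / (1 − e^{−z} − z e^{−z}) is strictly increasing on (0,∞), tends to 2 as z → 0⁺ and to ∞ as z → ∞; hence the equation k = ξ(1−e^{−ξ})/(1−e^{−ξ}−ξe^{−ξ}) has a unique positive solution ξ. -/
open Filter

private lemma fun_eq (z : ℝ) :
    z * (1 - Real.exp (-z)) / (1 - Real.exp (-z) - z * Real.exp (-z))
      = z * (Real.exp z - 1) / (Real.exp z - 1 - z) := by
  have h : Real.exp z ≠ 0 := Real.exp_ne_zero z
  rw [← mul_div_mul_right (z * (1 - Real.exp (-z)))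
      (1 - Real.exp (-z) - z * Real.exp (-z)) h]
  have h1 : Real.exp (-z) * Real.exp z = 1 := by
    rw [← Real.exp_add]; simp
  congr 1
  · linear_combination (-z) * h1
  · linear_combination (-(1+z)) * h1

private lemma Dpos {x : ℝ} (hx : 0 < x) : 0 < Real.exp x - 1 - x := by
  nlinarith [Real.add_one_lt_exp (ne_of_gt hx)]

private lemma hasDerivAtF {x : ℝ} (hx : 0 < x) :
    HasDerivAt (fun z : ℝ => z * (Real.exp z - 1) / (Real.exp z - 1 - z))
      (((Real.exp x - 1)^2 - x^2 * Real.exp x) / (Real.exp x - 1 - x)^2) x := by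
  have hN : HasDerivAt (fun z : ℝ => z * (Real.exp z - 1))
      (1 * (Real.exp x - 1) + x * Real.exp x) x :=
    (hasDerivAt_id x).mul ((Real.hasDerivAt_exp x).sub_const 1)
  have hD : HasDerivAt (fun z : ℝ => Real.exp z - 1 - z)
      (Real.exp x - 1) x := by
    have := ((Real.hasDerivAt_exp x).sub_const 1).sub (hasDerivAt_id x)
    exact this
  have hne : Real.exp x - 1 - x ≠ 0 := ne_of_gt (Dpos hx)
  have := hN.div hD hne
  refine this.congr_deriv ?_
  ring

private lemma numer_pos {x : ℝ} (hx : 0 < x) :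
    0 < (Real.exp x - 1)^2 - x^2 * Real.exp x := by
  have h2 : x / 2 < Real.sinh (x / 2) := Real.self_lt_sinh_iff.mpr (by linarith)
  rw [Real.sinh_eq] at h2
  set a := Real.exp (x/2) with ha
  set b := Real.exp (-(x/2)) with hb
  have hab : a * b = 1 := by rw [ha, hb, ← Real.exp_add]; simp
  have haa : a * a = Real.exp x := by rw [ha, ← Real.exp_add]; ring_nf
  have hapos : 0 < a := Real.exp_pos _
  have h3 : x * a < a * a - 1 := by nlinarith
  have h4 : 0 < x * a := mul_pos hx hapos
  nlinarith [sq_nonneg (a*a - 1 - x*a)]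

private lemma contF : ContinuousOn
    (fun z : ℝ => z * (Real.exp z - 1) / (Real.exp z - 1 - z)) (Set.Ioi 0) :=
  fun x hx => ((hasDerivAtF hx).continuousAt).continuousWithinAt

private lemma monoF : StrictMonoOn
    (fun z : ℝ => z * (Real.exp z - 1) / (Real.exp z - 1 - z)) (Set.Ioi 0) := by
  apply strictMonoOn_of_deriv_pos (convex_Ioi 0) contF
  intro x hx
  rw [interior_Ioi] at hx
  rw [(hasDerivAtF hx).deriv]
  exact div_pos (numer_pos hx) (pow_pos (Dpos hx) 2)

private lemma limF0 : Tendsto (fun z : ℝ => z * (Real.exp z - 1) / (Real.exp z - 1 - z))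
    (nhdsWithin 0 (Set.Ioi (0:ℝ))) (nhds 2) := by
  have hmem : ∀ᶠ x in nhdsWithin (0:ℝ) (Set.Ioi 0), x ∈ Set.Ioi (0:ℝ) :=
    eventually_mem_nhdsWithin
  have hslope : Tendsto (fun x : ℝ => (Real.exp x - 1) / x)
      (nhdsWithin 0 {(0:ℝ)}ᶜ) (nhds 1) := by
    have h := (Real.hasDerivAt_exp 0)
    rw [hasDerivAt_iff_tendsto_slope] at h
    simp only [Real.exp_zero] at h
    refine h.congr (fun x => ?_)
    simp [slope_def_field]
  have hinv : Tendsto (fun x : ℝ => x / (Real.exp x - 1))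
      (nhdsWithin 0 (Set.Ioi (0:ℝ))) (nhds 1) := by
    have := (hslope.inv₀ one_ne_zero).mono_left
      (nhdsWithin_mono 0 (fun x (hx : x ∈ Set.Ioi (0:ℝ)) => ne_of_gt hx))
    simp only [inv_one] at this
    refine this.congr (fun x => ?_)
    rw [inv_div]
  have hexp : Tendsto (fun x : ℝ => Real.exp x)
      (nhdsWithin 0 (Set.Ioi (0:ℝ))) (nhds 1) := by
    have : Tendsto Real.exp (nhds 0) (nhds 1) := by
      simpa using Real.continuous_exp.tendsto 0
    exact this.mono_left nhdsWithin_le_nhds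
  have hdiv : Tendsto (fun x : ℝ => (1 * (Real.exp x - 1) + x * Real.exp x) / (Real.exp x - 1))
      (nhdsWithin 0 (Set.Ioi (0:ℝ))) (nhds 2) := by
    have key : Tendsto (fun x : ℝ => 1 + Real.exp x * (x / (Real.exp x - 1)))
        (nhdsWithin 0 (Set.Ioi (0:ℝ))) (nhds 2) := by
      have h2 : Tendsto (fun x : ℝ => 1 + Real.exp x * (x / (Real.exp x - 1)))
          (nhdsWithin 0 (Set.Ioi (0:ℝ))) (nhds (1 + 1 * 1)) :=
        tendsto_const_nhds.add (hexp.mul hinv)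
      norm_num at h2
      exact h2
    refine Tendsto.congr' ?_ key
    filter_upwards [hmem] with x hx
    have h1 : Real.exp x - 1 ≠ 0 := by
      have : (1:ℝ) < Real.exp x := by
        rw [← Real.exp_zero]; exact Real.exp_lt_exp.mpr hx
      linarith
    field_simp
  refine HasDerivAt.lhopital_zero_nhdsGT ?_ ?_ ?_ ?_ ?_ hdiv
  · filter_upwards with x
    exact (hasDerivAt_id x).mul ((Real.hasDerivAt_exp x).sub_const 1)
  · filter_upwards with x
    have := ((Real.hasDerivAt_exp x).sub_const 1).sub (hasDerivAt_id x)
    exact this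
  · filter_upwards [hmem] with x hx
    have : (1:ℝ) < Real.exp x := by
      rw [← Real.exp_zero]; exact Real.exp_lt_exp.mpr hx
    intro h; linarith [h]
  · have : Tendsto (fun z : ℝ => z * (Real.exp z - 1)) (nhds 0) (nhds 0) := by
      have := Continuous.tendsto (by continuity : Continuous fun z : ℝ => z * (Real.exp z - 1)) 0
      simpa using this
    exact this.mono_left nhdsWithin_le_nhds
  · have : Tendsto (fun z : ℝ => Real.exp z - 1 - z) (nhds 0) (nhds 0) := by
      have := Continuous.tendsto (by continuity : Continuous fun z : ℝ => Real.exp z - 1 - z) 0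
      simpa using this
    exact this.mono_left nhdsWithin_le_nhds

private lemma limFtop : Tendsto (fun z : ℝ => z * (Real.exp z - 1) / (Real.exp z - 1 - z))
    atTop atTop := by
  apply tendsto_atTop_mono' _ _ tendsto_id
  filter_upwards [eventually_gt_atTop (0:ℝ)] with x hx
  have hD := Dpos hx
  simp only [id_eq]
  rw [le_div_iff₀ hD]
  nlinarith

/-- The function `z ↦ z(1−e^{−z})/(1−e^{−z}−z e^{−z})` is strictly increasing on `(0,∞)`,
tends to `2` as `z → 0⁺` and to `∞` as `z → ∞`; hence for every `k ≥ 3` the equation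
`k = ξ(1−e^{−ξ})/(1−e^{−ξ}−ξe^{−ξ})` has a unique positive solution `ξ`. -/
theorem cuckoo_threshold_function (k : ℕ) (hk : 3 ≤ k) :
    StrictMonoOn
        (fun z : ℝ => z * (1 - Real.exp (-z)) / (1 - Real.exp (-z) - z * Real.exp (-z)))
        (Set.Ioi (0 : ℝ)) ∧
      Tendsto
        (fun z : ℝ => z * (1 - Real.exp (-z)) / (1 - Real.exp (-z) - z * Real.exp (-z)))
        (nhdsWithin 0 (Set.Ioi (0 : ℝ))) (nhds 2) ∧
      Tendsto
        (fun z : ℝ => z * (1 - Real.exp (-z)) / (1 - Real.exp (-z) - z * Real.exp (-z)))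
        atTop atTop ∧
      ∃! ξ : ℝ, 0 < ξ ∧
        (k : ℝ) = ξ * (1 - Real.exp (-ξ)) / (1 - Real.exp (-ξ) - ξ * Real.exp (-ξ)) := by
  simp only [fun_eq]
  refine ⟨monoF, limF0, limFtop, ?_⟩
  -- existence and uniqueness of ξ
  have hk' : (3:ℝ) ≤ (k:ℝ) := by exact_mod_cast hk
  -- find a point a with F a < 5/2
  have hsmall : ∀ᶠ z in nhdsWithin (0:ℝ) (Set.Ioi 0),
      z * (Real.exp z - 1) / (Real.exp z - 1 - z) < 5/2 :=
    limF0.eventually (gt_mem_nhds (by norm_num : (2:ℝ) < 5/2))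
  obtain ⟨a, hasmall, ha⟩ := (hsmall.and eventually_mem_nhdsWithin).exists
  -- find a point b with F b > k and b > a
  have hbig : ∀ᶠ z in (atTop : Filter ℝ),
      (k:ℝ) < z * (Real.exp z - 1) / (Real.exp z - 1 - z) ∧ a < z :=
    (limFtop.eventually_gt_atTop (k:ℝ)).and (eventually_gt_atTop a)
  obtain ⟨b, hbbig, hab⟩ := hbig.exists
  have ha0 : (0:ℝ) < a := ha
  have hb0 : (0:ℝ) < b := lt_trans ha0 hab
  have hsub : Set.Icc a b ⊆ Set.Ioi (0:ℝ) := fun x hx => lt_of_lt_of_le ha0 hx.1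
  have hFa : a * (Real.exp a - 1) / (Real.exp a - 1 - a) ≤ (k:ℝ) := by linarith
  have hFb : (k:ℝ) ≤ b * (Real.exp b - 1) / (Real.exp b - 1 - b) := le_of_lt hbbig
  have hivt := intermediate_value_Icc (le_of_lt hab) (contF.mono hsub)
  obtain ⟨ξ, hξmem, hξeq⟩ := hivt ⟨hFa, hFb⟩
  have hξ0 : 0 < ξ := lt_of_lt_of_le ha0 hξmem.1
  have hξeq' : ξ * (Real.exp ξ - 1) / (Real.exp ξ - 1 - ξ) = (k:ℝ) := hξeq
  refine ⟨ξ, ⟨hξ0, hξeq'.symm⟩, ?_⟩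
  rintro y ⟨hy0, hyeq⟩
  exact monoF.injOn hy0 hξ0 (by rw [← hyeq, hξeq'])
end

section
/- Let φ^a and φ^b be probability generating functions of distributions π^a, π^b on ℕ with finite positive means, with size-biased generating functions φ̂^a(t)=φ^a{}'(t)/φ^a{}'(1) and φ̂^b(t)=φ^b{}'(t)/φ^b{}'(1). Define F^a(x) = φ^a(1 − φ̂^b(1−x)) − (φ^a{}'(1)/φ^b{}'(1))·(1 − φ^b(1−x) − x φ^b{}'(1−x)), and F^b symmetrically with roles of a and b swapped. If x ∈ [0,1] satisfies φ̂^a(1 − φ̂^b(1−x)) = x, then setting y = φ̂^b(1−x) and λ = φ^b{}'(1)/(φ^a{}'(1)+φ^b{}'(1)), one has λ(1 − F^a(x)) = (1−λ)(1 − F^b(y)). -/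
/-- Generating function `φ(x) = Σ_{n ≤ N} πₙ xⁿ` of a distribution supported on `{0,…,N}`. -/
noncomputable def pgf (N : ℕ) (π : ℕ → ℝ) (x : ℝ) : ℝ :=
  ∑ n ∈ Finset.range (N + 1), π n * x ^ n

/-- First derivative `φ'(x) = Σ n πₙ x^{n-1}`. -/
noncomputable def pgfD (N : ℕ) (π : ℕ → ℝ) (x : ℝ) : ℝ :=
  ∑ n ∈ Finset.range (N + 1), (n : ℝ) * π n * x ^ (n - 1)

/-- The function `F^a(x) = φ^a(1 − φ̂^b(1−x)) − (φ^a{}'(1)/φ^b{}'(1))(1 − φ^b(1−x) − x φ^b{}'(1−x))`,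
where `φ̂^b(t) = φ^b{}'(t)/φ^b{}'(1)`. -/
noncomputable def Fsym (Na : ℕ) (πa : ℕ → ℝ) (Nb : ℕ) (πb : ℕ → ℝ) (x : ℝ) : ℝ :=
  pgf Na πa (1 - pgfD Nb πb (1 - x) / pgfD Nb πb 1)
    - (pgfD Na πa 1 / pgfD Nb πb 1)
      * (1 - pgf Nb πb (1 - x) - x * pgfD Nb πb (1 - x))

/-- Symmetry of the bipartite formula: if `x` satisfies the fixed-point relation
`φ̂^a(1 − φ̂^b(1−x)) = x`, then with `y = φ̂^b(1−x)` and
`λ = φ^b{}'(1)/(φ^a{}'(1) + φ^b{}'(1))` one has `λ(1 − F^a(x)) = (1−λ)(1 − F^b(y))`. -/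
theorem bipartite_symmetry (Na : ℕ) (πa : ℕ → ℝ) (Nb : ℕ) (πb : ℕ → ℝ)
    (hπa : ∀ n, 0 ≤ πa n) (hπb : ∀ n, 0 ≤ πb n)
    (hsa : ∑ n ∈ Finset.range (Na + 1), πa n = 1)
    (hsb : ∑ n ∈ Finset.range (Nb + 1), πb n = 1)
    (hma : 0 < pgfD Na πa 1) (hmb : 0 < pgfD Nb πb 1)
    (x : ℝ) (hx0 : 0 ≤ x) (hx1 : x ≤ 1)
    (hfix : pgfD Na πa (1 - pgfD Nb πb (1 - x) / pgfD Nb πb 1) / pgfD Na πa 1 = x) :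
    (pgfD Nb πb 1 / (pgfD Na πa 1 + pgfD Nb πb 1)) * (1 - Fsym Na πa Nb πb x)
      = (1 - pgfD Nb πb 1 / (pgfD Na πa 1 + pgfD Nb πb 1))
          * (1 - Fsym Nb πb Na πa (pgfD Nb πb (1 - x) / pgfD Nb πb 1)) := by
  have hA : pgfD Na πa 1 ≠ 0 := ne_of_gt hma
  have hB : pgfD Nb πb 1 ≠ 0 := ne_of_gt hmb
  have hAB : pgfD Na πa 1 + pgfD Nb πb 1 ≠ 0 := by positivity
  set A := pgfD Na πa 1 with hAdef
  set B := pgfD Nb πb 1 with hBdef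
  set y : ℝ := pgfD Nb πb (1 - x) / B with hydef
  have h1 : pgfD Na πa (1 - y) = A * x := by
    rw [div_eq_iff hA] at hfix; linarith [hfix]
  have h2 : pgfD Nb πb (1 - x) = B * y := by
    rw [hydef]; field_simp
  simp only [Fsym, ← hAdef, ← hBdef, ← hydef, h2, h1]
  rw [show B * y / B = y by field_simp, show A * x / A = x by field_simp]
  field_simp
  ring
end
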